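/- In the Poisson-dephasing evolution model, the infidelity of the final state is bounded as: 1 − Re Tr(P(1)·ρ(1)) ≤ ‖P'(0)‖/λ(0) + ‖P'(1)‖/λ(1) + ∫₀¹ ( ‖P''(s)‖/λ(s) + |(1/λ)'(s)|·‖P'(s)‖ ) ds. -/

import Mathlib

open scoped Matrix.Norms.L2Operator Topology ComplexOrder


section Helpers
variable {n : ℕ}

open scoped MatrixOrder in
lemma trace_mul_le_opNorm (A R : Matrix (Fin n) (Fin n) ℂ)
    (hR : R.PosSemidef) (ht : R.trace = 1) :
    ‖(A * R).trace‖ ≤ ‖A‖ := by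
  classical
  set B := CFC.sqrt R with hBdef
  have hB : B.PosSemidef := Matrix.nonneg_iff_posSemidef.mp (CFC.sqrt_nonneg R)
  have hBH : B.IsHermitian := hB.1
  have hBB : B * B = R := CFC.sqrt_mul_sqrt_self R hR.nonneg
  set v : Fin n → EuclideanSpace ℂ (Fin n) := fun i => WithLp.toLp 2 (fun j => B j i) with hv
  have hdiag : ∀ i, (B * (A * B)) i i
      = inner (𝕜 := ℂ) (v i) ((EuclideanSpace.equiv (Fin n) ℂ).symm (A.mulVec (v i))) := by
    intro i
    rw [EuclideanSpace.inner_eq_star_dotProduct]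
    simp only [Matrix.mul_apply, dotProduct, Matrix.mulVec, Pi.star_apply, hv]
    refine Finset.sum_congr rfl fun j _ => ?_
    have : star (B j i) = B i j := hBH.apply i j
    exact (mul_comm _ _).trans (by rw [← this]; rfl)
  have htr : (A * R).trace = ∑ i, inner (𝕜 := ℂ) (v i)
      ((EuclideanSpace.equiv (Fin n) ℂ).symm (A.mulVec (v i))) := by
    rw [← hBB, ← mul_assoc, Matrix.trace_mul_comm (A * B) B]
    simp only [Matrix.trace, Matrix.diag, hdiag]
  have hsum : ∑ i, ‖v i‖ ^ 2 = 1 := by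
    have h2 : (R.trace) = ∑ i, (inner (𝕜 := ℂ) (v i) (v i)) := by
      rw [← hBB]
      simp only [Matrix.trace, Matrix.diag]
      refine Finset.sum_congr rfl fun i _ => ?_
      rw [EuclideanSpace.inner_eq_star_dotProduct]
      simp only [Matrix.mul_apply, dotProduct, Pi.star_apply, hv]
      refine Finset.sum_congr rfl fun j _ => ?_
      have : star (B j i) = B i j := hBH.apply i j
      rw [← this]
      exact mul_comm _ _
    have h3 : ((∑ i, ‖v i‖ ^ 2 : ℝ) : ℂ) = 1 := by
      rw [← ht, h2]
      push_cast
      refine (Finset.sum_congr rfl fun i _ => ?_).symm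
      rw [inner_self_eq_norm_sq_to_K]
      norm_num
    exact_mod_cast h3
  calc ‖(A * R).trace‖
      ≤ ∑ i, ‖(inner (𝕜 := ℂ) (v i)
          ((EuclideanSpace.equiv (Fin n) ℂ).symm (A.mulVec (v i))))‖ := by
        rw [htr]
        exact norm_sum_le _ _
    _ ≤ ∑ i, ‖A‖ * ‖v i‖ ^ 2 := by
        refine Finset.sum_le_sum fun i _ => ?_
        calc ‖(inner (𝕜 := ℂ) (v i)
              ((EuclideanSpace.equiv (Fin n) ℂ).symm (A.mulVec (v i))))‖
            ≤ ‖v i‖ * ‖(EuclideanSpace.equiv (Fin n) ℂ).symm (A.mulVec (v i))‖ := by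
              exact norm_inner_le_norm _ _
          _ ≤ ‖v i‖ * (‖A‖ * ‖v i‖) := by
              refine mul_le_mul_of_nonneg_left ?_ (norm_nonneg _)
              exact A.l2_opNorm_mulVec (v i)
          _ = ‖A‖ * ‖v i‖ ^ 2 := by ring
    _ = ‖A‖ := by rw [← Finset.mul_sum, hsum, mul_one]

lemma proj_alg (Pm Pd : Matrix (Fin n) (Fin n) ℂ)
    (h2 : Pm * Pm = Pm) (h1 : Pd = Pd * Pm + Pm * Pd) :
    Pm * Pd * Pm = 0 ∧ (1 - Pm) * Pd * (1 - Pm) = 0 := by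
  have e1 : Pm * Pd = Pm * Pd * Pm + Pm * Pd := by
    conv_lhs => rw [h1]
    rw [mul_add, ← mul_assoc, ← mul_assoc, h2]
  have hA : Pm * Pd * Pm = 0 := right_eq_add.mp e1
  refine ⟨hA, ?_⟩
  have e2 : (1 - Pm) * Pd * (1 - Pm) = Pd - Pd * Pm - Pm * Pd + Pm * Pd * Pm := by
    noncomm_ring
  rw [e2, hA]
  nth_rewrite 1 [h1]
  noncomm_ring

lemma tr_P (Pm R : Matrix (Fin n) (Fin n) ℂ) (h2 : Pm * Pm = Pm) :
    (Pm * (Pm * R * Pm)).trace = (Pm * R).trace := by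
  rw [show Pm * (Pm * R * Pm) = ((Pm * Pm) * R) * Pm by noncomm_ring, h2,
    Matrix.trace_mul_comm, ← mul_assoc, h2]

lemma tr_PQ (Pm S : Matrix (Fin n) (Fin n) ℂ) (h2 : Pm * Pm = Pm) :
    (Pm * ((1 - Pm) * S * (1 - Pm))).trace = 0 := by
  rw [show Pm * ((1 - Pm) * S * (1 - Pm)) = (Pm * (1 - Pm)) * (S * (1 - Pm)) by noncomm_ring,
    show Pm * (1 - Pm) = Pm - Pm * Pm by noncomm_ring, h2, sub_self, zero_mul,
    Matrix.trace_zero]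

lemma tr_P'P (Pm Pd R : Matrix (Fin n) (Fin n) ℂ) (hA : Pm * Pd * Pm = 0) :
    (Pd * (Pm * R * Pm)).trace = 0 := by
  rw [show Pd * (Pm * R * Pm) = (Pd * Pm * R) * Pm by noncomm_ring,
    Matrix.trace_mul_comm, show Pm * (Pd * Pm * R) = (Pm * Pd * Pm) * R by noncomm_ring,
    hA, zero_mul, Matrix.trace_zero]

lemma tr_P'Q (Pm Pd S : Matrix (Fin n) (Fin n) ℂ) (hQ : (1 - Pm) * Pd * (1 - Pm) = 0) :
    (Pd * ((1 - Pm) * S * (1 - Pm))).trace = 0 := by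
  rw [show Pd * ((1 - Pm) * S * (1 - Pm)) = (Pd * (1 - Pm) * S) * (1 - Pm) by noncomm_ring,
    Matrix.trace_mul_comm,
    show (1 - Pm) * (Pd * (1 - Pm) * S) = ((1 - Pm) * Pd * (1 - Pm)) * S by noncomm_ring,
    hQ, zero_mul, Matrix.trace_zero]

end Helpers

noncomputable def tre (n : ℕ) : Matrix (Fin n) (Fin n) ℂ →L[ℝ] ℝ :=
  Complex.reCLM.comp (LinearMap.toContinuousLinearMap
    ((Matrix.traceLinearMap (Fin n) ℂ ℂ).restrictScalars ℝ))

lemma tre_apply {n : ℕ} (M : Matrix (Fin n) (Fin n) ℂ) : tre n M = (M.trace).re := rfl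

lemma hasDerivWithinAt_tre {n : ℕ} {f : ℝ → Matrix (Fin n) (Fin n) ℂ}
    {d : Matrix (Fin n) (Fin n) ℂ} {s : Set ℝ} {x : ℝ} (h : HasDerivWithinAt f d s x) :
    HasDerivWithinAt (fun t => ((f t).trace).re) ((d.trace).re) s x := by
  have := (tre n).hasFDerivAt.comp_hasDerivWithinAt x h
  exact this


/-- Infidelity bound for the Poisson-dephasing evolution (Lemma `errorBound`):
`1 − Re Tr(P(1)ρ(1)) ≤ ‖P'(0)‖/λ(0) + ‖P'(1)‖/λ(1)
  + ∫₀¹ (‖P''(s)‖/λ(s) + |(1/λ)'(s)|·‖P'(s)‖) ds`. -/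
theorem stmt3 (n : ℕ) (hn : 1 ≤ n)
    (lam lam' : ℝ → ℝ)
    (P P' P'' ρ σ : ℝ → Matrix (Fin n) (Fin n) ℂ)
    -- `λ` is continuously differentiable and positive on `[0,1]`
    (hlampos : ∀ s ∈ Set.Icc (0:ℝ) 1, 0 < lam s)
    (hlamderiv : ∀ s ∈ Set.Icc (0:ℝ) 1, HasDerivWithinAt lam (lam' s) (Set.Icc 0 1) s)
    (hlam'cont : ContinuousOn lam' (Set.Icc 0 1))
    -- `P` is twice continuously differentiable on `[0,1]`
    (hPderiv : ∀ s ∈ Set.Icc (0:ℝ) 1, HasDerivWithinAt P (P' s) (Set.Icc 0 1) s)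
    (hPderiv2 : ∀ s ∈ Set.Icc (0:ℝ) 1, HasDerivWithinAt P' (P'' s) (Set.Icc 0 1) s)
    (hP''cont : ContinuousOn P'' (Set.Icc 0 1))
    -- each `P s` is an orthogonal projection
    (hPproj : ∀ s ∈ Set.Icc (0:ℝ) 1, (P s).IsHermitian ∧ P s * P s = P s)
    -- `σ` is continuous
    (hσcont : ContinuousOn σ (Set.Icc 0 1))
    -- `ρ` is a differentiable path of density matrices solving the dephasing ODE
    (hρdens : ∀ s ∈ Set.Icc (0:ℝ) 1, (ρ s).PosSemidef ∧ (ρ s).trace = 1)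
    (hρode : ∀ s ∈ Set.Icc (0:ℝ) 1, HasDerivWithinAt ρ
        (lam s • (P s * ρ s * P s + (1 - P s) * σ s * (1 - P s) - ρ s)) (Set.Icc 0 1) s)
    -- initial condition
    (hinit : ((P 0 * ρ 0).trace).re = 1) :
    1 - ((P 1 * ρ 1).trace).re ≤
      ‖P' 0‖ / lam 0 + ‖P' 1‖ / lam 1 +
        ∫ s in (0:ℝ)..1, (‖P'' s‖ / lam s + |lam' s| / (lam s) ^ 2 * ‖P' s‖) := by
  classical
  have h0I : (0:ℝ) ∈ Set.Icc (0:ℝ) 1 := ⟨le_refl 0, zero_le_one⟩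
  have h1I : (1:ℝ) ∈ Set.Icc (0:ℝ) 1 := ⟨zero_le_one, le_refl 1⟩
  have hlamne : ∀ s ∈ Set.Icc (0:ℝ) 1, lam s ≠ 0 := fun s hs => (hlampos s hs).ne'
  set D : ℝ → Matrix (Fin n) (Fin n) ℂ :=
    fun s => lam s • (P s * ρ s * P s + (1 - P s) * σ s * (1 - P s) - ρ s) with hD
  -- relation P' = P'P + PP'
  have hrel : ∀ s ∈ Set.Icc (0:ℝ) 1, P' s = P' s * P s + P s * P' s := by
    intro s hs
    have h1 : HasDerivWithinAt (fun t => P t * P t) (P' s * P s + P s * P' s)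
        (Set.Icc 0 1) s := (hPderiv s hs).mul (hPderiv s hs)
    have h2 : HasDerivWithinAt P (P' s * P s + P s * P' s) (Set.Icc 0 1) s :=
      h1.congr (fun t ht => ((hPproj t ht).2).symm) ((hPproj s hs).2).symm
    exact UniqueDiffWithinAt.eq_deriv _ ((uniqueDiffOn_Icc one_pos) s hs) (hPderiv s hs) h2
  have halg := fun s hs => proj_alg (P s) (P' s) (hPproj s hs).2 (hrel s hs)
  -- trace identities for D
  have htrPD : ∀ s ∈ Set.Icc (0:ℝ) 1, (P s * D s).trace = 0 := by
    intro s hs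
    rw [show D s = lam s • (P s * ρ s * P s + (1 - P s) * σ s * (1 - P s) - ρ s) from rfl,
      mul_smul_comm, Matrix.trace_smul, mul_sub, mul_add, Matrix.trace_sub,
      Matrix.trace_add, tr_P _ _ (hPproj s hs).2, tr_PQ _ _ (hPproj s hs).2]
    simp
  have htrP'D : ∀ s ∈ Set.Icc (0:ℝ) 1,
      (P' s * D s).trace = -(lam s • (P' s * ρ s).trace) := by
    intro s hs
    rw [show D s = lam s • (P s * ρ s * P s + (1 - P s) * σ s * (1 - P s) - ρ s) from rfl,
      mul_smul_comm, Matrix.trace_smul, mul_sub, mul_add, Matrix.trace_sub,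
      Matrix.trace_add, tr_P'P _ _ _ (halg s hs).1, tr_P'Q _ _ _ (halg s hs).2]
    simp
  -- scalar functions
  set g : ℝ → ℝ := fun s => ((P' s * ρ s).trace).re with hg
  set F : ℝ → ℝ := fun s => ((P s * ρ s).trace).re + g s / lam s with hF
  set u : ℝ → ℝ := fun s => ((P'' s * ρ s).trace).re / lam s - g s * lam' s / (lam s) ^ 2
    with hu
  have hf' : ∀ s ∈ Set.Icc (0:ℝ) 1,
      HasDerivWithinAt (fun t => ((P t * ρ t).trace).re) (g s) (Set.Icc 0 1) s := by
    intro s hs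
    have h1 : HasDerivWithinAt (fun t => P t * ρ t) (P' s * ρ s + P s * D s)
        (Set.Icc 0 1) s := (hPderiv s hs).mul (hρode s hs)
    have h2 := hasDerivWithinAt_tre h1
    simpa [Matrix.trace_add, htrPD s hs, hg] using h2
  have hg' : ∀ s ∈ Set.Icc (0:ℝ) 1,
      HasDerivWithinAt g (((P'' s * ρ s).trace).re - lam s * g s) (Set.Icc 0 1) s := by
    intro s hs
    have h1 : HasDerivWithinAt (fun t => P' t * ρ t) (P'' s * ρ s + P' s * D s)
        (Set.Icc 0 1) s := (hPderiv2 s hs).mul (hρode s hs)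
    have h2 := hasDerivWithinAt_tre h1
    simp only [Matrix.trace_add, htrP'D s hs, Complex.add_re, Complex.neg_re,
      Complex.real_smul, Complex.mul_re, Complex.ofReal_re, Complex.ofReal_im] at h2
    simpa [hg, sub_eq_add_neg] using h2
  have hF' : ∀ s ∈ Set.Icc (0:ℝ) 1, HasDerivWithinAt F (u s) (Set.Icc 0 1) s := by
    intro s hs
    have h3 := (hf' s hs).add ((hg' s hs).div (hlamderiv s hs) (hlamne s hs))
    refine h3.congr_deriv ?_
    have hne := hlamne s hs
    rw [hu]
    field_simp
    ring
  -- continuity facts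
  have hρc : ContinuousOn ρ (Set.Icc 0 1) := fun s hs => (hρode s hs).continuousWithinAt
  have hPc : ContinuousOn P (Set.Icc 0 1) := fun s hs => (hPderiv s hs).continuousWithinAt
  have hP'c : ContinuousOn P' (Set.Icc 0 1) := fun s hs => (hPderiv2 s hs).continuousWithinAt
  have hlamc : ContinuousOn lam (Set.Icc 0 1) := fun s hs => (hlamderiv s hs).continuousWithinAt
  have hc2 : ContinuousOn (fun s => ((P'' s * ρ s).trace).re) (Set.Icc 0 1) :=
    (tre n).continuous.comp_continuousOn (hP''cont.mul hρc)
  have hgc : ContinuousOn g (Set.Icc 0 1) :=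
    (tre n).continuous.comp_continuousOn (hP'c.mul hρc)
  have huc : ContinuousOn u (Set.Icc 0 1) :=
    (hc2.div hlamc hlamne).sub ((hgc.mul hlam'cont).div (hlamc.pow 2)
      (fun s hs => pow_ne_zero 2 (hlamne s hs)))
  have hu_int : IntervalIntegrable u MeasureTheory.volume 0 1 :=
    (huc.mono (by rw [Set.uIcc_of_le zero_le_one])).intervalIntegrable
  have hFc : ContinuousOn F (Set.Icc 0 1) := fun s hs => (hF' s hs).continuousWithinAt
  have hFTC : ∫ s in (0:ℝ)..1, u s = F 1 - F 0 :=
    intervalIntegral.integral_eq_sub_of_hasDeriv_right_of_le zero_le_one hFc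
      (fun x hx => (((hF' x (Set.Ioo_subset_Icc_self hx)).hasDerivAt
        (Icc_mem_nhds hx.1 hx.2)).hasDerivWithinAt)) hu_int
  -- bounds
  have habs_g : ∀ s ∈ Set.Icc (0:ℝ) 1, |g s| ≤ ‖P' s‖ := fun s hs =>
    le_trans (Complex.abs_re_le_norm _)
      (trace_mul_le_opNorm (P' s) (ρ s) (hρdens s hs).1 (hρdens s hs).2)
  have habs2 : ∀ s ∈ Set.Icc (0:ℝ) 1, |((P'' s * ρ s).trace).re| ≤ ‖P'' s‖ := fun s hs =>
    le_trans (Complex.abs_re_le_norm _)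
      (trace_mul_le_opNorm (P'' s) (ρ s) (hρdens s hs).1 (hρdens s hs).2)
  set v : ℝ → ℝ := fun s => ‖P'' s‖ / lam s + |lam' s| / (lam s) ^ 2 * ‖P' s‖ with hv
  have hvc : ContinuousOn v (Set.Icc 0 1) :=
    (hP''cont.norm.div hlamc hlamne).add
      (((hlam'cont.abs.div (hlamc.pow 2) (fun s hs => pow_ne_zero 2 (hlamne s hs)))).mul
        hP'c.norm)
  have hv_int : IntervalIntegrable v MeasureTheory.volume 0 1 :=
    (hvc.mono (by rw [Set.uIcc_of_le zero_le_one])).intervalIntegrable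
  have hptw : ∀ s ∈ Set.Icc (0:ℝ) 1, -u s ≤ v s := by
    intro s hs
    have hlp := hlampos s hs
    have h1 : |((P'' s * ρ s).trace).re / lam s| ≤ ‖P'' s‖ / lam s := by
      rw [abs_div, abs_of_pos hlp]
      gcongr
      exact habs2 s hs
    have h2 : |g s * lam' s / (lam s) ^ 2| ≤ |lam' s| / (lam s) ^ 2 * ‖P' s‖ := by
      rw [abs_div, abs_mul, abs_of_pos (pow_pos hlp 2)]
      rw [div_mul_eq_mul_div, div_le_div_iff₀ (pow_pos hlp 2) (pow_pos hlp 2)]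
      have := mul_le_mul_of_nonneg_right (mul_le_mul_of_nonneg_right (habs_g s hs)
        (abs_nonneg (lam' s))) (le_of_lt (pow_pos hlp 2))
      calc |g s| * |lam' s| * lam s ^ 2 ≤ ‖P' s‖ * |lam' s| * lam s ^ 2 := this
        _ = |lam' s| * ‖P' s‖ * lam s ^ 2 := by ring
    calc -u s ≤ |u s| := neg_le_abs _
      _ ≤ |((P'' s * ρ s).trace).re / lam s| + |g s * lam' s / (lam s) ^ 2| := by
          rw [hu]; exact abs_sub _ _
      _ ≤ v s := add_le_add h1 h2
  have hmono : ∫ s in (0:ℝ)..1, (-u s) ≤ ∫ s in (0:ℝ)..1, v s :=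
    intervalIntegral.integral_mono_on zero_le_one hu_int.neg hv_int hptw
  rw [intervalIntegral.integral_neg] at hmono
  -- assemble
  have hF0 : F 0 = 1 + g 0 / lam 0 := by rw [hF]; simp [hinit]
  have hF1 : F 1 = ((P 1 * ρ 1).trace).re + g 1 / lam 1 := rfl
  have hg1 : g 1 / lam 1 ≤ ‖P' 1‖ / lam 1 := by
    gcongr
    · exact (hlampos 1 h1I).le
    · exact (le_abs_self _).trans (habs_g 1 h1I)
  have hg0 : -(g 0 / lam 0) ≤ ‖P' 0‖ / lam 0 := by
    rw [← neg_div]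
    gcongr
    · exact (hlampos 0 h0I).le
    · exact (neg_le_abs _).trans (habs_g 0 h0I)
  have hveq : (∫ s in (0:ℝ)..1, (‖P'' s‖ / lam s + |lam' s| / (lam s) ^ 2 * ‖P' s‖))
      = ∫ s in (0:ℝ)..1, v s := rfl
  rw [hveq]
  have : ∫ s in (0:ℝ)..1, u s = F 1 - F 0 := hFTC
  rw [hF0, hF1] at this
  linarith
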